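/- Let λ ≥ μ + 1 with μ > 0, and define the odd orthonormal generalized Gegenbauer polynomial C̃_{2n+1}^{(λ,μ)}(t) = ã_{2n+1}^{(λ,μ)} t P_n^{(λ-1/2, μ+1/2)}(2t² - 1) with ã_{2n+1}^{(λ,μ)} = ((2n+λ+μ+1) Γ(n+1) Γ(n+λ+μ+1) / (Γ(n+λ+1/2) Γ(n+μ+3/2)))^{1/2}. Then max_{t ∈ [-1,1]} |C̃_{2n+1}^{(λ,μ)}(t)| ≍ n^λ as n → ∞. -/

import Mathlib

open Real Set Polynomial

/-- Jacobi polynomial `P_n^{(a,b)}` in the standard normalization. -/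
noncomputable def jacobiP (a b : ℝ) (n : ℕ) (x : ℝ) : ℝ :=
  (Nat.factorial n : ℝ)⁻¹ *
    ∑ k ∈ Finset.range (n + 1),
      (Nat.choose n k : ℝ) * (ascPochhammer ℝ k).eval ((n : ℝ) + a + b + 1) *
        (ascPochhammer ℝ (n - k)).eval (a + (k : ℝ) + 1) * ((x - 1) / 2) ^ k

/-- Pochhammer symbol `(q)_n` for real `q`. -/
noncomputable def poch (q : ℝ) (n : ℕ) : ℝ := (ascPochhammer ℝ n).eval q

/-- Normalization constant for odd orthonormal generalized Gegenbauer polynomials. -/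
noncomputable def atilde2n1 (l m : ℝ) (n : ℕ) : ℝ :=
  (((2 * n + l + m + 1) * Real.Gamma (n + 1) * Real.Gamma (n + l + m + 1)) /
    (Real.Gamma (n + l + 1 / 2) * Real.Gamma (n + m + 3 / 2))) ^ ((1 : ℝ) / 2)

lemma poch_zero (q : ℝ) : poch q 0 = 1 := by simp [poch]

lemma poch_succ (q : ℝ) (n : ℕ) : poch q (n + 1) = poch q n * (q + n) := by
  simp [poch, ascPochhammer_succ_eval]

lemma poch_succ_left (q : ℝ) (n : ℕ) : poch q (n + 1) = q * poch (q + 1) n := by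
  simp only [poch, ascPochhammer_succ_left, Polynomial.eval_mul, Polynomial.eval_X,
    Polynomial.eval_comp, Polynomial.eval_add, Polynomial.eval_one]

lemma poch_pos {q : ℝ} (hq : 0 < q) (n : ℕ) : 0 < poch q n := by
  induction n with
  | zero => simp [poch_zero]
  | succ k ih => rw [poch_succ]; positivity

lemma poch_le_poch {q r : ℝ} (hq : 0 < q) (hqr : q ≤ r) (n : ℕ) : poch q n ≤ poch r n := by
  induction n with
  | zero => simp [poch_zero]
  | succ k ih =>
    rw [poch_succ, poch_succ]
    have h1 : (0:ℝ) < q + k := by positivity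
    exact mul_le_mul ih (by linarith) h1.le ((poch_pos (lt_of_lt_of_le hq hqr) k)).le

lemma Gamma_poch {q : ℝ} (hq : 0 < q) (n : ℕ) :
    Real.Gamma q * poch q n = Real.Gamma (q + n) := by
  induction n with
  | zero => simp [poch_zero]
  | succ k ih =>
    rw [poch_succ, ← mul_assoc, ih]
    have h1 : (0:ℝ) < q + k := by positivity
    rw [show q + (↑(k+1):ℝ) = (q + k) + 1 by push_cast; ring,
      Real.Gamma_add_one h1.ne', mul_comm]

/-- coefficients of the Jacobi polynomial in the variable `(x-1)/2`. -/
noncomputable def jc (a b : ℝ) (n k : ℕ) : ℝ :=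
  (Nat.factorial n : ℝ)⁻¹ * (n.choose k) * poch ((n:ℝ) + a + b + 1) k * poch (a + k + 1) (n - k)

lemma jc_eq_zero {a b : ℝ} {n k : ℕ} (h : n < k) : jc a b n k = 0 := by
  simp [jc, Nat.choose_eq_zero_of_lt h]

lemma jc_rec (a b : ℝ) (n k : ℕ) :
    ((k:ℝ) + 1) * (a + k + 1) * jc a b n (k + 1)
      = ((n:ℝ) - k) * ((n:ℝ) + k + a + b + 1) * jc a b n k := by
  rcases lt_trichotomy k n with hk | rfl | hk
  · have hsub : n - k = (n - (k + 1)) + 1 := by omega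
    have hchoose : ((n.choose (k+1) : ℝ)) * ((k:ℝ)+1) = (n.choose k) * ((n:ℝ) - (k:ℝ)) := by
      have := Nat.choose_succ_right_eq n k
      have h2 : ((n.choose (k+1)) * (k+1) : ℝ) = ((n.choose k) * (n - k) : ℕ) := by
        exact_mod_cast congrArg (Nat.cast : ℕ → ℝ) this
      rw [h2]; push_cast [Nat.cast_sub hk.le]; ring
    have e1 : jc a b n (k+1) = (Nat.factorial n : ℝ)⁻¹ * (n.choose (k+1)) *
        (poch ((n:ℝ) + a + b + 1) k * ((n:ℝ) + a + b + 1 + k)) *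
        poch (a + (k:ℝ) + 2) (n - (k+1)) := by
      rw [jc, poch_succ, show (a + ((k+1 : ℕ):ℝ) + 1) = a + (k:ℝ) + 2 by push_cast; ring]
    have e2 : jc a b n k = (Nat.factorial n : ℝ)⁻¹ * (n.choose k) *
        poch ((n:ℝ) + a + b + 1) k *
        ((a + (k:ℝ) + 1) * poch (a + (k:ℝ) + 2) (n - (k+1))) := by
      rw [jc, hsub, poch_succ_left, show a + (k:ℝ) + 1 + 1 = a + (k:ℝ) + 2 by ring]
    rw [e1, e2]
    linear_combination ((a+(k:ℝ)+1) * ((n:ℝ)+a+b+1+(k:ℝ)) * poch ((n:ℝ)+a+b+1) k *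
      poch (a+(k:ℝ)+2) (n-(k+1)) * (Nat.factorial n : ℝ)⁻¹) * hchoose
  · rw [jc_eq_zero (Nat.lt_succ_self k)]; ring
  · rw [jc_eq_zero hk, jc_eq_zero (by omega)]
    ring

/-- The Jacobi polynomial as a polynomial in `w = (x-1)/2`. -/
noncomputable def Jw (a b : ℝ) (n : ℕ) : Polynomial ℝ :=
  ∑ k ∈ Finset.range (n + 1), Polynomial.C (jc a b n k) * Polynomial.X ^ k

lemma coeff_Jw (a b : ℝ) (n k : ℕ) : (Jw a b n).coeff k = jc a b n k := by
  rw [Jw, Polynomial.finset_sum_coeff]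
  simp only [Polynomial.coeff_C_mul_X_pow]
  rw [Finset.sum_ite_eq (Finset.range (n+1)) k]
  by_cases h : k ∈ Finset.range (n+1)
  · rw [if_pos h]
  · rw [if_neg h, jc_eq_zero (by simpa using h)]

lemma jacobiP_eq_eval (a b : ℝ) (n : ℕ) (x : ℝ) :
    jacobiP a b n x = (Jw a b n).eval ((x - 1) / 2) := by
  rw [jacobiP, Jw, Polynomial.eval_finset_sum, Finset.mul_sum]
  refine Finset.sum_congr rfl fun k _ => ?_
  simp only [Polynomial.eval_mul, Polynomial.eval_C, Polynomial.eval_pow, Polynomial.eval_X, jc,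
    poch]
  ring

lemma odeW (a b : ℝ) (n : ℕ) :
    Polynomial.X * (1 + Polynomial.X) * (Polynomial.derivative (Polynomial.derivative (Jw a b n))) +
      (Polynomial.C (a+1) + Polynomial.C (a+b+2) * Polynomial.X) * Polynomial.derivative (Jw a b n)
    = Polynomial.C ((n:ℝ) * ((n:ℝ) + a + b + 1)) * Jw a b n := by
  set q1 := Polynomial.derivative (Jw a b n) with hq1
  set q2 := Polynomial.derivative q1 with hq2
  have hL : Polynomial.X * (1 + Polynomial.X) * q2 +
      (Polynomial.C (a+1) + Polynomial.C (a+b+2) * Polynomial.X) * q1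
      = Polynomial.X * q2 + Polynomial.X * (Polynomial.X * q2) + Polynomial.C (a+1) * q1
        + Polynomial.C (a+b+2) * (Polynomial.X * q1) := by ring
  rw [hL]
  ext k
  have hc1 : ∀ j, q1.coeff j = jc a b n (j+1) * (j+1) := by
    intro j; rw [hq1, Polynomial.coeff_derivative, coeff_Jw]
  have hc2 : ∀ j, q2.coeff j = jc a b n (j+2) * (j+2) * (j+1) := by
    intro j; rw [hq2, Polynomial.coeff_derivative, hc1]; push_cast; ring
  rcases k with _ | _ | j
  · simp only [Polynomial.coeff_add, Polynomial.mul_coeff_zero, Polynomial.coeff_X_zero,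
      Polynomial.coeff_C_mul, Polynomial.coeff_C_zero, zero_mul, hc1, coeff_Jw]
    have := jc_rec a b n 0
    push_cast at this ⊢
    linear_combination this
  · simp only [Polynomial.coeff_add, Polynomial.coeff_X_mul, Polynomial.mul_coeff_zero,
      Polynomial.coeff_X_zero, Polynomial.coeff_C_mul, zero_mul, hc1, hc2, coeff_Jw]
    have := jc_rec a b n 1
    push_cast at this ⊢
    linear_combination this
  · simp only [Polynomial.coeff_add, Polynomial.coeff_X_mul, Polynomial.coeff_C_mul,
      hc1, hc2, coeff_Jw]
    have h1 := jc_rec a b n (j+2)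
    push_cast at h1 ⊢
    linear_combination h1

lemma alt_sum (n : ℕ) : ∀ a s : ℝ,
    ∑ k ∈ Finset.range (n+1),
      (-1:ℝ)^k * (n.choose k) * poch s k * poch (a + k + 1) (n - k)
      = poch (a + 1 - s) n := by
  induction n with
  | zero => intro a s; simp [poch_zero]
  | succ n ih =>
    intro a s
    have hg1 : ∑ k ∈ Finset.range (n+2),
        (-1:ℝ)^k * (n.choose k) * poch s k * poch (a + k + 1) (n - k)
        = poch (a + 1 - s) n := by
      rw [Finset.sum_range_succ, ih a s,
        Nat.choose_eq_zero_of_lt (Nat.lt_succ_self n)]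
      simp
    have hsplit : ∀ i ∈ Finset.range (n+1),
        (-1:ℝ)^(i+1) * ((n+1).choose (i+1)) * poch s (i+1)
          * poch (a + ((i+1 : ℕ) : ℝ) + 1) (n + 1 - (i+1))
        = -s * ((-1:ℝ)^i * (n.choose i) * poch (s+1) i * poch ((a+1) + (i:ℝ) + 1) (n - i))
          + (a + (n:ℝ) + 1) *
            ((-1:ℝ)^(i+1) * (n.choose (i+1)) * poch s (i+1)
              * poch (a + ((i+1 : ℕ) : ℝ) + 1) (n - (i+1))) := by
      intro i hi
      have hi' : i ≤ n := by simpa [Nat.lt_succ_iff] using hi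
      rw [Nat.choose_succ_succ n i]
      have h1 : n + 1 - (i+1) = n - i := by omega
      rw [h1, poch_succ_left s i]
      rw [show (a + ((i+1 : ℕ) : ℝ) + 1) = (a+1) + (i:ℝ) + 1 by push_cast; ring]
      rcases Nat.lt_or_ge i n with hlt | hge
      · have h2 : n - i = (n - (i+1)) + 1 := by omega
        rw [h2, poch_succ]
        have h3 : ((n - (i+1) : ℕ) : ℝ) = (n:ℝ) - i - 1 := by
          rw [Nat.cast_sub hlt]; push_cast; ring
        rw [h3]
        push_cast
        ring
      · have hin : i = n := le_antisymm hi' hge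
        subst hin
        rw [Nat.choose_eq_zero_of_lt (Nat.lt_succ_self i)]
        push_cast
        ring
    rw [Finset.sum_range_succ', Finset.sum_congr rfl hsplit, Finset.sum_add_distrib]
    have hA : ∑ i ∈ Finset.range (n+1),
        -s * ((-1:ℝ)^i * (n.choose i) * poch (s+1) i * poch ((a+1) + (i:ℝ) + 1) (n - i))
        = -s * poch (a + 1 - s) n := by
      rw [← Finset.mul_sum, ih (a+1) (s+1)]
      ring_nf
    have hB : ∑ i ∈ Finset.range (n+1),
        (a + (n:ℝ) + 1) * ((-1:ℝ)^(i+1) * (n.choose (i+1)) * poch s (i+1)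
          * poch (a + ((i+1 : ℕ) : ℝ) + 1) (n - (i+1)))
        = (a + (n:ℝ) + 1) * (poch (a + 1 - s) n - poch (a + 1) n) := by
      rw [← Finset.mul_sum]
      congr 1
      have := Finset.sum_range_succ' (fun k =>
        (-1:ℝ)^k * (n.choose k) * poch s k * poch (a + (k:ℝ) + 1) (n - k)) (n+1)
      have h0 : (-1:ℝ)^0 * (n.choose 0) * poch s 0 * poch (a + ((0:ℕ):ℝ) + 1) (n - 0)
          = poch (a + 1) n := by
        simp [poch_zero]
      rw [hg1] at this
      linarith [this, h0]
    rw [hA, hB]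
    have hf0 : (-1:ℝ)^0 * (((n+1).choose 0 : ℕ) : ℝ) * poch s 0
        * poch (a + ((0:ℕ):ℝ) + 1) (n + 1 - 0) = poch (a + 1) (n+1) := by
      simp [poch_zero]
    rw [hf0]
    have e1 : poch (a+1) (n+1) = poch (a+1) n * (a + 1 + n) := poch_succ _ _
    have e2 : poch (a+1-s) (n+1) = poch (a+1-s) n * (a + 1 - s + n) := poch_succ _ _
    push_cast at e1 e2 ⊢
    linarith [e1, e2, mul_comm (poch (a+1-s) n) (a+1-s+(n:ℝ))]

lemma poch_neg (n : ℕ) : ∀ b : ℝ, poch (-(b + n)) n = (-1:ℝ)^n * poch (b+1) n := by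
  induction n with
  | zero => intro b; simp [poch_zero]
  | succ n ih =>
    intro b
    have h1 : poch (-(b + ((n+1:ℕ):ℝ))) (n+1)
        = poch (-(b + ((n+1:ℕ):ℝ))) n * (-(b + ((n+1:ℕ):ℝ)) + n) := poch_succ _ _
    rw [h1, show (-(b + ((n+1:ℕ):ℝ))) = -((b+1) + (n:ℝ)) by push_cast; ring, ih (b+1)]
    rw [poch_succ_left (b+1) n]
    push_cast
    ring

lemma Jw_eval (a b : ℝ) (n : ℕ) (w : ℝ) :
    (Jw a b n).eval w = ∑ k ∈ Finset.range (n+1), jc a b n k * w ^ k := by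
  rw [Jw, Polynomial.eval_finset_sum]
  simp

lemma jacobiP_one (a b : ℝ) (n : ℕ) :
    jacobiP a b n 1 = (Nat.factorial n : ℝ)⁻¹ * poch (a+1) n := by
  rw [jacobiP_eq_eval]
  norm_num [Jw_eval, Finset.sum_range_succ']
  rcases n with _ | n
  · simp [jc, poch_zero]
  · simp [jc, poch_zero]

lemma jacobiP_neg_one (a b : ℝ) (n : ℕ) :
    jacobiP a b n (-1) = (-1:ℝ)^n * (Nat.factorial n : ℝ)⁻¹ * poch (b+1) n := by
  rw [jacobiP_eq_eval, show ((-1:ℝ) - 1)/2 = -1 by norm_num, Jw_eval]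
  have : ∀ k ∈ Finset.range (n+1), jc a b n k * (-1:ℝ)^k
      = (Nat.factorial n : ℝ)⁻¹ *
        ((-1:ℝ)^k * (n.choose k) * poch ((n:ℝ) + a + b + 1) k * poch (a + (k:ℝ) + 1) (n - k)) := by
    intro k hk
    rw [jc]; ring
  rw [Finset.sum_congr rfl this, ← Finset.mul_sum, alt_sum n a ((n:ℝ) + a + b + 1),
    show a + 1 - ((n:ℝ) + a + b + 1) = -(b + (n:ℝ)) by ring, poch_neg n b]
  ring

/-- Jacobi polynomial as a polynomial in `x`. -/
noncomputable def Jx (a b : ℝ) (n : ℕ) : Polynomial ℝ :=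
  (Jw a b n).comp (Polynomial.C (1/2 : ℝ) * (Polynomial.X - 1))

lemma jacobiP_eq_evalx (a b : ℝ) (n : ℕ) (x : ℝ) :
    jacobiP a b n x = (Jx a b n).eval x := by
  rw [jacobiP_eq_eval, Jx, Polynomial.eval_comp]
  norm_num
  ring_nf

lemma deriv_Jx (a b : ℝ) (n : ℕ) :
    Polynomial.derivative (Jx a b n)
      = (Polynomial.derivative (Jw a b n)).comp
          (Polynomial.C (1/2 : ℝ) * (Polynomial.X - 1)) * Polynomial.C (1/2 : ℝ) := by
  rw [Jx, Polynomial.derivative_comp]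
  have : Polynomial.derivative (Polynomial.C (1/2 : ℝ) * (Polynomial.X - 1))
      = Polynomial.C (1/2 : ℝ) := by
    simp
  rw [this]
  ring

lemma odeX (a b : ℝ) (n : ℕ) (x : ℝ) :
    (1 - x^2) * (Polynomial.derivative (Polynomial.derivative (Jx a b n))).eval x
      + ((b - a) - (a+b+2)*x) * (Polynomial.derivative (Jx a b n)).eval x
      + ((n:ℝ) * ((n:ℝ) + a + b + 1)) * (Jx a b n).eval x = 0 := by
  have hW := congrArg (Polynomial.eval ((x - 1)/2)) (odeW a b n)
  simp only [Polynomial.eval_mul, Polynomial.eval_add, Polynomial.eval_one,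
    Polynomial.eval_X, Polynomial.eval_C] at hW
  have hφ : Polynomial.eval x (Polynomial.C (1/2 : ℝ) * (Polynomial.X - 1)) = (x - 1)/2 := by
    simp; ring
  have h1 : (Polynomial.derivative (Jx a b n)).eval x
      = (Polynomial.derivative (Jw a b n)).eval ((x-1)/2) * (1/2) := by
    rw [deriv_Jx, Polynomial.eval_mul, Polynomial.eval_comp, hφ, Polynomial.eval_C]
  have h2 : (Polynomial.derivative (Polynomial.derivative (Jx a b n))).eval x
      = (Polynomial.derivative (Polynomial.derivative (Jw a b n))).eval ((x-1)/2) * (1/4) := by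
    rw [deriv_Jx, Polynomial.derivative_mul, Polynomial.derivative_C, mul_zero, add_zero,
      Polynomial.derivative_comp]
    have : Polynomial.derivative (Polynomial.C (1/2 : ℝ) * (Polynomial.X - 1))
        = Polynomial.C (1/2 : ℝ) := by simp
    rw [this]
    simp only [Polynomial.eval_mul, Polynomial.eval_C, Polynomial.eval_comp, hφ]
    ring
  have h3 : (Jx a b n).eval x = (Jw a b n).eval ((x-1)/2) := by
    rw [Jx, Polynomial.eval_comp, hφ]
  rw [h1, h2, h3]
  linear_combination -hW

lemma jacobi_sq_le (a b : ℝ) (hb : 0 ≤ b) (hab : b ≤ a) (n : ℕ) (hn : 1 ≤ n) :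
    ∀ x ∈ Set.Icc (-1:ℝ) 1, (jacobiP a b n x)^2 ≤ (jacobiP a b n 1)^2 := by
  have hX : (0:ℝ) < (n:ℝ) * ((n:ℝ) + a + b + 1) := by
    have h1 : (1:ℝ) ≤ (n:ℝ) := by exact_mod_cast hn
    nlinarith
  set X_ : ℝ := (n:ℝ) * ((n:ℝ) + a + b + 1) with hX_
  set P : ℝ → ℝ := fun x => (Jx a b n).eval x with hP
  set P' : ℝ → ℝ := fun x => (Polynomial.derivative (Jx a b n)).eval x with hP'
  set F : ℝ → ℝ := fun x => (P x)^2 + (1 - x^2) * (P' x)^2 / X_ with hF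
  have hder : ∀ x : ℝ, HasDerivAt F ((2 * (P' x)^2 / X_) * ((a - b) + (a+b+1)*x)) x := by
    intro x
    have d1 : HasDerivAt P (P' x) x := Polynomial.hasDerivAt _ x
    have d2 : HasDerivAt P'
        ((Polynomial.derivative (Polynomial.derivative (Jx a b n))).eval x) x :=
      Polynomial.hasDerivAt _ x
    set P'' := (Polynomial.derivative (Polynomial.derivative (Jx a b n))).eval x
    have dsq : HasDerivAt (fun x => (P x)^2) (2 * P x * P' x) x := by
      have h := d1.fun_mul d1
      have heq : (fun y => P y * P y) = fun y => (P y)^2 := by funext y; ring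
      rw [heq] at h
      exact h.congr_deriv (by ring)
    have dquad : HasDerivAt (fun x : ℝ => 1 - x^2) (-(2*x)) x := by
      simpa using (hasDerivAt_pow 2 x).const_sub 1
    have dp2 : HasDerivAt (fun x => (P' x)^2) (2 * P' x * P'') x := by
      have h := d2.fun_mul d2
      have heq : (fun y => P' y * P' y) = fun y => (P' y)^2 := by funext y; ring
      rw [heq] at h
      exact h.congr_deriv (by ring)
    have dmul : HasDerivAt (fun x => (1 - x^2) * (P' x)^2)
        (-(2*x) * (P' x)^2 + (1 - x^2) * (2 * P' x * P'')) x := dquad.mul dp2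
    have dF : HasDerivAt F
        (2 * P x * P' x + (-(2*x) * (P' x)^2 + (1 - x^2) * (2 * P' x * P'')) / X_) x := by
      exact dsq.add (dmul.div_const X_)
    have hode : (1 - x^2) * P'' + ((b - a) - (a+b+2)*x) * P' x + X_ * P x = 0 :=
      odeX a b n x
    convert dF using 1
    field_simp
    linear_combination (-P' x) * hode
  have hcont : Continuous F := by
    exact continuous_iff_continuousAt.2 fun x => (hder x).continuousAt
  set x₀ : ℝ := (b - a)/(a+b+1) with hx₀
  have habp : (0:ℝ) < a + b + 1 := by linarith
  have hx₀0 : x₀ ≤ 0 := div_nonpos_of_nonpos_of_nonneg (by linarith) habp.le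
  have hx₀1 : -1 ≤ x₀ := by
    rw [hx₀, le_div_iff₀ habp]
    linarith
  have hmono : MonotoneOn F (Set.Icc x₀ 1) := by
    apply monotoneOn_of_deriv_nonneg (convex_Icc _ _) hcont.continuousOn
    · intro x hx
      exact (hder x).differentiableAt.differentiableWithinAt
    · intro x hx
      rw [interior_Icc] at hx
      rw [(hder x).deriv]
      have h1 : 0 ≤ (a - b) + (a+b+1)*x := by
        have := hx.1
        rw [hx₀, div_lt_iff₀ habp] at this
        nlinarith
      have h2 : 0 ≤ 2 * (P' x)^2 / X_ := by positivity
      exact mul_nonneg h2 h1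
  have hanti : AntitoneOn F (Set.Icc (-1) x₀) := by
    apply antitoneOn_of_deriv_nonpos (convex_Icc _ _) hcont.continuousOn
    · intro x hx
      exact (hder x).differentiableAt.differentiableWithinAt
    · intro x hx
      rw [interior_Icc] at hx
      rw [(hder x).deriv]
      have h1 : (a - b) + (a+b+1)*x ≤ 0 := by
        have := hx.2
        rw [hx₀, lt_div_iff₀ habp] at this
        nlinarith
      have h2 : 0 ≤ 2 * (P' x)^2 / X_ := by positivity
      exact mul_nonpos_of_nonneg_of_nonpos h2 h1
  have hF1 : F 1 = (P 1)^2 := by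
    rw [hF]; norm_num
  have hFm1 : F (-1) = (P (-1))^2 := by
    rw [hF]; norm_num
  have hPm1 : (P (-1))^2 ≤ (P 1)^2 := by
    have e1 : P (-1) = (-1:ℝ)^n * (Nat.factorial n : ℝ)⁻¹ * poch (b+1) n := by
      show Polynomial.eval (-1:ℝ) (Jx a b n) = _
      rw [← jacobiP_eq_evalx, jacobiP_neg_one]
    have e2 : P 1 = (Nat.factorial n : ℝ)⁻¹ * poch (a+1) n := by
      show Polynomial.eval (1:ℝ) (Jx a b n) = _
      rw [← jacobiP_eq_evalx, jacobiP_one]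
    rw [e1, e2, mul_pow, mul_pow, mul_pow, ← pow_mul]
    have hpb : (0:ℝ) ≤ poch (b+1) n := (poch_pos (by linarith) n).le
    have hple : poch (b+1) n ≤ poch (a+1) n := poch_le_poch (by linarith) (by linarith) n
    have : (poch (b+1) n)^2 ≤ (poch (a+1) n)^2 := by nlinarith
    have hfac : (0:ℝ) ≤ ((Nat.factorial n : ℝ)⁻¹)^2 := by positivity
    calc ((-1:ℝ))^(n*2) * ((Nat.factorial n : ℝ)⁻¹)^2 * (poch (b+1) n)^2
        = ((Nat.factorial n : ℝ)⁻¹)^2 * (poch (b+1) n)^2 := by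
          rw [mul_comm n 2, pow_mul]; norm_num
      _ ≤ ((Nat.factorial n : ℝ)⁻¹)^2 * (poch (a+1) n)^2 := by nlinarith
  intro x hx
  have hsq : (P x)^2 ≤ F x := by
    have hx2 : x^2 ≤ 1 := by
      rcases hx with ⟨ha1, ha2⟩
      nlinarith
    have h1 : 0 ≤ (1 - x^2) * (P' x)^2 / X_ :=
      div_nonneg (mul_nonneg (by linarith) (sq_nonneg _)) hX.le
    rw [hF]
    linarith
  have key : F x ≤ (P 1)^2 := by
    rcases le_or_gt x₀ x with hcase | hcase
    · have h := hmono ⟨hcase, hx.2⟩ ⟨by linarith, le_refl (1:ℝ)⟩ hx.2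
      rw [hF1] at h
      exact h
    · have h := hanti ⟨le_refl (-1:ℝ), hx₀1⟩ ⟨hx.1, hcase.le⟩ hx.1
      rw [hFm1] at h
      linarith [hPm1]
  rw [jacobiP_eq_evalx, jacobiP_eq_evalx]
  calc ((Jx a b n).eval x)^2 = (P x)^2 := rfl
    _ ≤ (P 1)^2 := le_trans hsq key
    _ = ((Jx a b n).eval 1)^2 := rfl

lemma gautschi_upper {s x : ℝ} (hs0 : 0 ≤ s) (hs1 : s ≤ 1) (hx : 1 ≤ x) :
    Real.Gamma (x + s) ≤ Real.Gamma x * x ^ s := by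
  have hx0 : (0:ℝ) < x := by linarith
  have hxs : (0:ℝ) < x + s := by linarith
  have hΓx : 0 < Real.Gamma x := Real.Gamma_pos_of_pos hx0
  have hΓxs : 0 < Real.Gamma (x + s) := Real.Gamma_pos_of_pos hxs
  have hΓx1 : 0 < Real.Gamma (x + 1) := Real.Gamma_pos_of_pos (by linarith)
  have hcvx := Real.convexOn_log_Gamma
  have h := hcvx.2 (Set.mem_Ioi.2 hx0) (Set.mem_Ioi.2 (show (0:ℝ) < x + 1 by linarith))
    (by linarith : (0:ℝ) ≤ 1 - s) hs0 (by ring)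
  simp only [smul_eq_mul, Function.comp] at h
  have harg : (1 - s) * x + s * (x + 1) = x + s := by ring
  rw [harg] at h
  have h2 : Real.Gamma (x + s) ≤ Real.Gamma x ^ (1 - s) * Real.Gamma (x + 1) ^ s := by
    have := Real.exp_le_exp.2 h
    rw [Real.exp_log hΓxs, Real.exp_add] at this
    rwa [Real.rpow_def_of_pos hΓx, Real.rpow_def_of_pos hΓx1, mul_comm (Real.log _),
      mul_comm (Real.log _)]
  have h3 : Real.Gamma (x + 1) = x * Real.Gamma x := Real.Gamma_add_one hx0.ne'
  calc Real.Gamma (x + s) ≤ Real.Gamma x ^ (1 - s) * Real.Gamma (x + 1) ^ s := h2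
    _ = Real.Gamma x ^ (1 - s) * (x ^ s * Real.Gamma x ^ s) := by
        rw [h3, Real.mul_rpow hx0.le hΓx.le]
    _ = (Real.Gamma x ^ (1 - s) * Real.Gamma x ^ s) * x ^ s := by ring
    _ = Real.Gamma x * x ^ s := by
        rw [← Real.rpow_add hΓx]; norm_num

lemma gautschi_lower {s x : ℝ} (hs0 : 0 ≤ s) (hs1 : s ≤ 1) (hx : 1 ≤ x) :
    Real.Gamma x * x ^ s / 2 ≤ Real.Gamma (x + s) := by
  have hx0 : (0:ℝ) < x := by linarith
  have hxs : (0:ℝ) < x + s := by linarith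
  have hΓx : 0 < Real.Gamma x := Real.Gamma_pos_of_pos hx0
  have hΓxs : 0 < Real.Gamma (x + s) := Real.Gamma_pos_of_pos hxs
  have hcvx := Real.convexOn_log_Gamma
  have h := hcvx.2 (Set.mem_Ioi.2 hxs) (Set.mem_Ioi.2 (show (0:ℝ) < x + s + 1 by linarith))
    hs0 (by linarith : (0:ℝ) ≤ 1 - s) (by ring)
  simp only [smul_eq_mul, Function.comp] at h
  have harg : s * (x + s) + (1 - s) * (x + s + 1) = x + 1 := by ring
  rw [harg] at h
  -- Γ(x+1) ≤ Γ(x+s)^s * Γ(x+s+1)^(1-s) = Γ(x+s) * (x+s)^(1-s)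
  have h2 : Real.Gamma (x + 1) ≤ Real.Gamma (x + s) * (x + s) ^ (1 - s) := by
    have hexp := Real.exp_le_exp.2 h
    rw [Real.exp_log (Real.Gamma_pos_of_pos (by linarith : (0:ℝ) < x + 1)), Real.exp_add] at hexp
    have e1 : Real.exp (s * Real.log (Real.Gamma (x + s))) = Real.Gamma (x + s) ^ s := by
      rw [Real.rpow_def_of_pos hΓxs, mul_comm]
    have e2 : Real.exp ((1 - s) * Real.log (Real.Gamma (x + s + 1))) =
        Real.Gamma (x + s + 1) ^ (1 - s) := by
      rw [Real.rpow_def_of_pos (Real.Gamma_pos_of_pos (by linarith)), mul_comm]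
    rw [e1, e2] at hexp
    have h3 : Real.Gamma (x + s + 1) = (x + s) * Real.Gamma (x + s) := Real.Gamma_add_one hxs.ne'
    calc Real.Gamma (x + 1) ≤ Real.Gamma (x + s) ^ s * Real.Gamma (x + s + 1) ^ (1 - s) := hexp
      _ = Real.Gamma (x + s) ^ s * ((x + s) ^ (1-s) * Real.Gamma (x + s) ^ (1-s)) := by
          rw [h3, Real.mul_rpow hxs.le hΓxs.le]
      _ = (Real.Gamma (x + s) ^ s * Real.Gamma (x + s) ^ (1-s)) * (x + s) ^ (1-s) := by ring
      _ = Real.Gamma (x + s) * (x + s) ^ (1 - s) := by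
          rw [← Real.rpow_add hΓxs]; norm_num
  have h4 : Real.Gamma (x + 1) = x * Real.Gamma x := Real.Gamma_add_one hx0.ne'
  have h5 : (x + s) ^ (1 - s) ≤ 2 * x ^ (1 - s) := by
    have : (x + s) ^ (1-s) ≤ (2*x) ^ (1-s) :=
      Real.rpow_le_rpow hxs.le (by linarith) (by linarith)
    calc (x + s) ^ (1-s) ≤ (2*x) ^ (1-s) := this
      _ = 2 ^ (1-s) * x ^ (1-s) := Real.mul_rpow (by norm_num) hx0.le
      _ ≤ 2 ^ (1:ℝ) * x ^ (1-s) := by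
          have h2le : (2:ℝ) ^ (1-s) ≤ 2 ^ (1:ℝ) :=
            Real.rpow_le_rpow_of_exponent_le (by norm_num) (by linarith)
          have : (0:ℝ) ≤ x ^ (1-s) := (Real.rpow_pos_of_pos hx0 _).le
          nlinarith
      _ = 2 * x ^ (1-s) := by norm_num
  -- combine:  x Γx ≤ Γ(x+s) (x+s)^{1-s} ≤ Γ(x+s) 2 x^{1-s}
  have h6 : x * Real.Gamma x ≤ Real.Gamma (x + s) * (2 * x ^ (1 - s)) := by
    calc x * Real.Gamma x = Real.Gamma (x + 1) := h4.symm
      _ ≤ Real.Gamma (x + s) * (x + s) ^ (1 - s) := h2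
      _ ≤ Real.Gamma (x + s) * (2 * x ^ (1 - s)) := by
          exact mul_le_mul_of_nonneg_left h5 hΓxs.le
  have hxpow : x ^ s * x ^ (1 - s) = x := by
    rw [← Real.rpow_add hx0]; norm_num
  have hxx : (0:ℝ) < x ^ (1 - s) := Real.rpow_pos_of_pos hx0 _
  rw [div_le_iff₀ (by norm_num : (0:ℝ) < 2)]
  calc Real.Gamma x * x ^ s = Real.Gamma x * x ^ s * (x ^ (1-s) / x ^ (1-s)) := by
        rw [div_self hxx.ne']; ring
    _ = (x * Real.Gamma x) / x ^ (1-s) := by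
        field_simp
        nlinarith [hxpow]
    _ ≤ (Real.Gamma (x + s) * (2 * x ^ (1 - s))) / x ^ (1-s) := by
        gcongr
    _ = Real.Gamma (x + s) * 2 := by
        field_simp

lemma gamma_ratio_aux : ∀ k : ℕ, ∀ d : ℝ, 0 ≤ d → d ≤ k + 1 →
    ∃ c1 c2 : ℝ, 0 < c1 ∧ 0 < c2 ∧ ∀ x : ℝ, 1 ≤ x →
      c1 * (x ^ d * Real.Gamma x) ≤ Real.Gamma (x + d) ∧
      Real.Gamma (x + d) ≤ c2 * (x ^ d * Real.Gamma x) := by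
  intro k
  induction k with
  | zero =>
    intro d hd0 hd1
    refine ⟨1/2, 1, by norm_num, by norm_num, fun x hx => ?_⟩
    constructor
    · have := gautschi_lower hd0 (by norm_num at hd1 ⊢; linarith) hx
      linarith
    · have := gautschi_upper hd0 (by norm_num at hd1 ⊢; linarith) hx
      linarith
  | succ k ih =>
    intro d hd0 hd2
    rcases le_or_gt d (k + 1) with hle | hgt
    · exact ih d hd0 hle
    · obtain ⟨c1, c2, hc1, hc2, hbound⟩ := ih (d - 1) (by push_cast at hgt ⊢; linarith)
        (by push_cast at hd2 ⊢; linarith)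
      refine ⟨c1, c2 * (1 + d), hc1, by positivity, fun x hx => ?_⟩
      have hx0 : (0:ℝ) < x := by linarith
      have hd1 : (1:ℝ) ≤ d := by
        have hk0 : (0:ℝ) ≤ (k:ℝ) := Nat.cast_nonneg k
        push_cast at hgt; linarith
      have hΓ : Real.Gamma (x + d) = (x + d - 1) * Real.Gamma (x + (d - 1)) := by
        have h := Real.Gamma_add_one (show (0:ℝ) < x + (d - 1) by linarith).ne'
        rw [show (x + (d - 1)) + 1 = x + d by ring] at h
        rw [h]; ring
      obtain ⟨hlow, hup⟩ := hbound x hx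
      have hpow : x ^ (d - 1) * x = x ^ d := by
        rw [← Real.rpow_add_one hx0.ne' (d-1)]; ring_nf
      have hΓx : 0 < Real.Gamma x := Real.Gamma_pos_of_pos hx0
      have hxd : (0:ℝ) < x ^ (d-1) := Real.rpow_pos_of_pos hx0 _
      have hGpos : 0 < Real.Gamma (x + (d - 1)) := Real.Gamma_pos_of_pos (by linarith)
      constructor
      · have h1 : x ≤ x + d - 1 := by linarith
        calc c1 * (x ^ d * Real.Gamma x) = x * (c1 * (x ^ (d-1) * Real.Gamma x)) := by
              rw [← hpow]; ring
          _ ≤ x * Real.Gamma (x + (d - 1)) := by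
              exact mul_le_mul_of_nonneg_left hlow hx0.le
          _ ≤ (x + d - 1) * Real.Gamma (x + (d - 1)) := by
              exact mul_le_mul_of_nonneg_right h1 hGpos.le
          _ = Real.Gamma (x + d) := hΓ.symm
      · have h1 : x + d - 1 ≤ (1 + d) * x := by nlinarith
        calc Real.Gamma (x + d) = (x + d - 1) * Real.Gamma (x + (d - 1)) := hΓ
          _ ≤ ((1 + d) * x) * Real.Gamma (x + (d - 1)) := by
              exact mul_le_mul_of_nonneg_right h1 hGpos.le
          _ ≤ ((1 + d) * x) * (c2 * (x ^ (d-1) * Real.Gamma x)) := by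
              apply mul_le_mul_of_nonneg_left hup
              positivity
          _ = c2 * (1 + d) * (x ^ d * Real.Gamma x) := by
              rw [← hpow]; ring

lemma gamma_ratio (d : ℝ) (hd : 0 ≤ d) :
    ∃ c1 c2 : ℝ, 0 < c1 ∧ 0 < c2 ∧ ∀ x : ℝ, 1 ≤ x →
      c1 * (x ^ d * Real.Gamma x) ≤ Real.Gamma (x + d) ∧
      Real.Gamma (x + d) ≤ c2 * (x ^ d * Real.Gamma x) := by
  obtain ⟨k, hk⟩ := exists_nat_ge d
  exact gamma_ratio_aux k d hd (by push_cast; linarith)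

set_option maxHeartbeats 1000000 in
theorem odd_gegenbauer_max_asymp_large_lambda (l m : ℝ) (hm : 0 < m) (hlm : m + 1 ≤ l) :
    ∃ C₁ C₂ : ℝ, 0 < C₁ ∧ 0 < C₂ ∧ ∃ n₀ : ℕ, ∀ n : ℕ, n₀ ≤ n →
      C₁ * (n : ℝ) ^ l ≤
        sSup ((fun t : ℝ =>
            |atilde2n1 l m n * t * jacobiP (l - 1 / 2) (m + 1 / 2) n (2 * t ^ 2 - 1)|) ''
          Set.Icc (-1) 1) ∧
      sSup ((fun t : ℝ =>
            |atilde2n1 l m n * t * jacobiP (l - 1 / 2) (m + 1 / 2) n (2 * t ^ 2 - 1)|) ''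
          Set.Icc (-1) 1) ≤ C₂ * (n : ℝ) ^ l := by
  have hl1 : (1:ℝ) < l := by linarith
  set a : ℝ := l - 1/2 with ha_def
  set b : ℝ := m + 1/2 with hb_def
  have hb0 : (0:ℝ) ≤ b := by rw [hb_def]; linarith
  have hab : b ≤ a := by rw [ha_def, hb_def]; linarith
  have hg0 : (0:ℝ) < a + 1 := by rw [ha_def]; linarith
  set g : ℝ := Real.Gamma (a + 1) with hg_def
  have hgpos : 0 < g := Real.Gamma_pos_of_pos hg0
  have hd0 : (0:ℝ) ≤ a := by rw [ha_def]; linarith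
  obtain ⟨c1, c2, hc1, hc2, hrat⟩ := gamma_ratio a hd0
  set cl : ℝ := c1^2 / g^2 with hcl_def
  set cu : ℝ := c2^2 * (m+3)^a * 2^a * (l+m+3) / g^2 with hcu_def
  have hclpos : 0 < cl := by
    rw [hcl_def]; positivity
  have hcupos : 0 < cu := by
    have h1 : (0:ℝ) < (m+3)^a := Real.rpow_pos_of_pos (by linarith) a
    have h2 : (0:ℝ) < (2:ℝ)^a := Real.rpow_pos_of_pos (by norm_num) a
    rw [hcu_def]; positivity
  refine ⟨Real.sqrt cl, Real.sqrt cu, Real.sqrt_pos.2 hclpos, Real.sqrt_pos.2 hcupos, 1,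
    fun n hn => ?_⟩
  have hn1 : (1:ℝ) ≤ (n:ℝ) := by exact_mod_cast hn
  have hn0 : (0:ℝ) < (n:ℝ) := by linarith
  have hm2n : (m+2) * 1 ≤ (m+2) * (n:ℝ) := mul_le_mul_of_nonneg_left hn1 (by linarith)
  have hnm3 : (n:ℝ) + m + 3/2 ≤ (m+3) * (n:ℝ) := by linarith
  have hn12 : (n:ℝ) + 1 ≤ 2 * (n:ℝ) := by linarith
  have hlm1n : (l+m+1) * 1 ≤ (l+m+1) * (n:ℝ) := mul_le_mul_of_nonneg_left hn1 (by linarith)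
  have hk3u : 2 * (n:ℝ) + l + m + 1 ≤ (l+m+3) * (n:ℝ) := by linarith
  -- Gamma positivity
  have hG1 : 0 < Real.Gamma ((n:ℝ) + 1) := Real.Gamma_pos_of_pos (by linarith)
  have hG2 : 0 < Real.Gamma ((n:ℝ) + l + m + 1) := Real.Gamma_pos_of_pos (by linarith)
  have hG3 : 0 < Real.Gamma ((n:ℝ) + l + 1/2) := Real.Gamma_pos_of_pos (by linarith)
  have hG4 : 0 < Real.Gamma ((n:ℝ) + m + 3/2) := Real.Gamma_pos_of_pos (by linarith)
  have hEpos : 0 < ((2 * (n:ℝ) + l + m + 1) * Real.Gamma ((n:ℝ) + 1) *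
      Real.Gamma ((n:ℝ) + l + m + 1)) /
      (Real.Gamma ((n:ℝ) + l + 1/2) * Real.Gamma ((n:ℝ) + m + 3/2)) := by
    have h0 : (0:ℝ) < 2 * (n:ℝ) + l + m + 1 := by linarith
    positivity
  have hatil : 0 < atilde2n1 l m n := by
    rw [atilde2n1]
    exact Real.rpow_pos_of_pos hEpos _
  -- the value at the right endpoint
  have hP1 : jacobiP a b n 1 = (Nat.factorial n : ℝ)⁻¹ * poch (a+1) n := jacobiP_one a b n
  have hpochpos : 0 < poch (a+1) n := poch_pos hg0 n
  have hfacpos : (0:ℝ) < (Nat.factorial n : ℝ) := by positivity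
  have hP1pos : 0 < jacobiP a b n 1 := by rw [hP1]; positivity
  set Bn : ℝ := atilde2n1 l m n * ((Nat.factorial n : ℝ)⁻¹ * poch (a+1) n) with hBn_def
  have hBnpos : 0 < Bn := by rw [hBn_def]; positivity
  -- pointwise bound
  have habs : ∀ t ∈ Set.Icc (-1:ℝ) 1,
      |atilde2n1 l m n * t * jacobiP a b n (2 * t^2 - 1)| ≤ Bn := by
    intro t ht
    have ht2 : t^2 ≤ 1 := by
      rcases ht with ⟨h1, h2⟩; nlinarith
    have hxmem : (2 * t^2 - 1) ∈ Set.Icc (-1:ℝ) 1 := by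
      constructor <;> [nlinarith; nlinarith]
    have hsq := jacobi_sq_le a b hb0 hab n hn (2 * t^2 - 1) hxmem
    have hJle : |jacobiP a b n (2 * t^2 - 1)| ≤ jacobiP a b n 1 := by
      have h1 : |jacobiP a b n (2 * t^2 - 1)| ≤ |jacobiP a b n 1| := by
        rw [← Real.sqrt_sq_eq_abs, ← Real.sqrt_sq_eq_abs]
        exact Real.sqrt_le_sqrt hsq
      rwa [abs_of_pos hP1pos] at h1
    have htle : |t| ≤ 1 := by
      rw [abs_le]; exact ht
    calc |atilde2n1 l m n * t * jacobiP a b n (2 * t^2 - 1)|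
        = atilde2n1 l m n * |t| * |jacobiP a b n (2 * t^2 - 1)| := by
          rw [abs_mul, abs_mul, abs_of_pos hatil]
      _ ≤ atilde2n1 l m n * 1 * jacobiP a b n 1 := by
          apply mul_le_mul _ hJle (abs_nonneg _) (by positivity)
          exact mul_le_mul_of_nonneg_left htle hatil.le
      _ = Bn := by rw [hBn_def, hP1]; ring
  -- the sup equals Bn
  have hSup : sSup ((fun t : ℝ =>
      |atilde2n1 l m n * t * jacobiP a b n (2 * t ^ 2 - 1)|) '' Set.Icc (-1) 1) = Bn := by
    have h1mem : (1:ℝ) ∈ Set.Icc (-1:ℝ) 1 := ⟨by norm_num, le_refl 1⟩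
    have hf1 : |atilde2n1 l m n * 1 * jacobiP a b n (2 * 1^2 - 1)| = Bn := by
      have harg : (2 * (1:ℝ)^2 - 1) = 1 := by norm_num
      rw [harg, mul_one, abs_mul, abs_of_pos hatil, abs_of_pos hP1pos, hBn_def, hP1]
    apply le_antisymm
    · apply Real.sSup_le
      · rintro y ⟨t, ht, rfl⟩
        exact habs t ht
      · exact hBnpos.le
    · apply le_csSup
      · refine ⟨Bn, ?_⟩
        rintro y ⟨t, ht, rfl⟩
        exact habs t ht
      · exact ⟨1, h1mem, hf1⟩
  rw [hSup]
  -- now the asymptotic bounds on Bn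
  have hBsq : Bn^2 = (2 * (n:ℝ) + l + m + 1) * Real.Gamma ((n:ℝ) + l + m + 1) *
      Real.Gamma ((n:ℝ) + l + 1/2) /
      (Real.Gamma ((n:ℝ) + m + 3/2) * Real.Gamma ((n:ℝ) + 1) * g^2) := by
    have hat2 : (atilde2n1 l m n)^2 = ((2 * (n:ℝ) + l + m + 1) * Real.Gamma ((n:ℝ) + 1) *
        Real.Gamma ((n:ℝ) + l + m + 1)) /
        (Real.Gamma ((n:ℝ) + l + 1/2) * Real.Gamma ((n:ℝ) + m + 3/2)) := by
      rw [atilde2n1, ← Real.rpow_natCast (_ ^ ((1:ℝ)/2)) 2, ← Real.rpow_mul hEpos.le]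
      norm_num
    have hpoch : poch (a+1) n = Real.Gamma ((n:ℝ) + l + 1/2) / g := by
      have := Gamma_poch hg0 n
      rw [hg_def]
      rw [eq_div_iff hgpos.ne', mul_comm]
      rw [this, ha_def]
      ring_nf
    have hfac : (Nat.factorial n : ℝ) = Real.Gamma ((n:ℝ) + 1) := by
      rw [Real.Gamma_nat_eq_factorial]
    rw [hBn_def, mul_pow, hat2, mul_pow, hpoch, hfac, div_pow]
    field_simp
  -- apply the gamma ratio bounds
  have hx1 : (1:ℝ) ≤ (n:ℝ) + m + 3/2 := by linarith
  have hx2 : (1:ℝ) ≤ (n:ℝ) + 1 := by linarith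
  obtain ⟨hrat1l, hrat1u⟩ := hrat ((n:ℝ) + m + 3/2) hx1
  obtain ⟨hrat2l, hrat2u⟩ := hrat ((n:ℝ) + 1) hx2
  rw [show (n:ℝ) + m + 3/2 + a = (n:ℝ) + l + m + 1 by rw [ha_def]; ring] at hrat1l hrat1u
  rw [show (n:ℝ) + 1 + a = (n:ℝ) + l + 1/2 by rw [ha_def]; ring] at hrat2l hrat2u
  have hndpos : (0:ℝ) < (n:ℝ)^a := Real.rpow_pos_of_pos hn0 a
  have hpow1l : (n:ℝ)^a ≤ ((n:ℝ) + m + 3/2)^a :=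
    Real.rpow_le_rpow hn0.le (by linarith) hd0
  have hpow2l : (n:ℝ)^a ≤ ((n:ℝ) + 1)^a :=
    Real.rpow_le_rpow hn0.le (by linarith) hd0
  have hpow1u : ((n:ℝ) + m + 3/2)^a ≤ (m+3)^a * (n:ℝ)^a := by
    rw [← Real.mul_rpow (by linarith) hn0.le]
    exact Real.rpow_le_rpow (by linarith) hnm3 hd0
  have hpow2u : ((n:ℝ) + 1)^a ≤ 2^a * (n:ℝ)^a := by
    rw [← Real.mul_rpow (by norm_num) hn0.le]
    exact Real.rpow_le_rpow (by linarith) hn12 hd0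
  set G1 := Real.Gamma ((n:ℝ) + 1)
  set G2 := Real.Gamma ((n:ℝ) + l + m + 1)
  set G3 := Real.Gamma ((n:ℝ) + l + 1/2)
  set G4 := Real.Gamma ((n:ℝ) + m + 3/2)
  -- lower bound on Bn^2
  have k1 : c1 * ((n:ℝ)^a * G4) ≤ G2 := by
    refine le_trans ?_ hrat1l
    have h := mul_le_mul_of_nonneg_right hpow1l hG4.le
    exact mul_le_mul_of_nonneg_left h hc1.le
  have k2 : c1 * ((n:ℝ)^a * G1) ≤ G3 := by
    refine le_trans ?_ hrat2l
    have h := mul_le_mul_of_nonneg_right hpow2l hG1.le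
    exact mul_le_mul_of_nonneg_left h hc1.le
  have k3 : (n:ℝ) ≤ 2 * (n:ℝ) + l + m + 1 := by linarith
  have k12 : (c1 * ((n:ℝ)^a * G4)) * (c1 * ((n:ℝ)^a * G1)) ≤ G2 * G3 :=
    mul_le_mul k1 k2 (by positivity) hG2.le
  have key : ((c1 * ((n:ℝ)^a * G4)) * (c1 * ((n:ℝ)^a * G1))) * (n:ℝ)
      ≤ (G2 * G3) * (2 * (n:ℝ) + l + m + 1) :=
    mul_le_mul k12 k3 hn0.le (by positivity)
  have hlow : cl * ((n:ℝ)^a * (n:ℝ)^a * (n:ℝ)) ≤ Bn^2 := by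
    rw [hBsq, hcl_def, div_mul_eq_mul_div, div_le_div_iff₀ (by positivity) (by positivity)]
    have hkey2 := mul_le_mul_of_nonneg_right key (sq_nonneg g)
    refine le_trans (le_of_eq (by ring)) (le_trans hkey2 (le_of_eq (by ring)))
  -- upper bound on Bn^2
  have k1u : G2 ≤ c2 * ((m+3)^a * (n:ℝ)^a * G4) := by
    refine le_trans hrat1u ?_
    have h := mul_le_mul_of_nonneg_right hpow1u hG4.le
    exact mul_le_mul_of_nonneg_left h hc2.le
  have k2u : G3 ≤ c2 * (2^a * (n:ℝ)^a * G1) := by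
    refine le_trans hrat2u ?_
    have h := mul_le_mul_of_nonneg_right hpow2u hG1.le
    exact mul_le_mul_of_nonneg_left h hc2.le
  have k3u : 2 * (n:ℝ) + l + m + 1 ≤ (l+m+3) * (n:ℝ) := hk3u
  have hpm3 : (0:ℝ) < (m+3)^a := Real.rpow_pos_of_pos (by linarith) a
  have hp2 : (0:ℝ) < (2:ℝ)^a := Real.rpow_pos_of_pos (by norm_num) a
  have k12u : G2 * G3 ≤ (c2 * ((m+3)^a * (n:ℝ)^a * G4)) * (c2 * (2^a * (n:ℝ)^a * G1)) :=
    mul_le_mul k1u k2u hG3.le (by positivity)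
  have keyu : (G2 * G3) * (2 * (n:ℝ) + l + m + 1)
      ≤ ((c2 * ((m+3)^a * (n:ℝ)^a * G4)) * (c2 * (2^a * (n:ℝ)^a * G1))) * ((l+m+3) * (n:ℝ)) :=
    mul_le_mul k12u k3u (by linarith) (by positivity)
  have hup : Bn^2 ≤ cu * ((n:ℝ)^a * (n:ℝ)^a * (n:ℝ)) := by
    rw [hBsq, hcu_def, div_mul_eq_mul_div, div_le_div_iff₀ (by positivity) (by positivity)]
    refine le_trans (le_of_eq (by ring))
      (le_trans (mul_le_mul_of_nonneg_right keyu (sq_nonneg g)) (le_of_eq (by ring)))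
  -- convert to bounds on Bn
  have hnl : (n:ℝ)^a * (n:ℝ)^a * (n:ℝ) = ((n:ℝ)^l)^2 := by
    calc (n:ℝ)^a * (n:ℝ)^a * (n:ℝ) = (n:ℝ)^a * (n:ℝ)^a * (n:ℝ)^(1:ℝ) := by
          rw [Real.rpow_one]
      _ = (n:ℝ)^(a+a+1) := by
          rw [← Real.rpow_add hn0, ← Real.rpow_add hn0]
      _ = (n:ℝ)^(l+l) := by
          congr 1
          rw [ha_def]; ring
      _ = ((n:ℝ)^l)^2 := by
          rw [Real.rpow_add hn0, sq]
  have hnlpos : (0:ℝ) < (n:ℝ)^l := Real.rpow_pos_of_pos hn0 l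
  constructor
  · calc Real.sqrt cl * (n:ℝ)^l
        = Real.sqrt (cl * ((n:ℝ)^l)^2) := by
          rw [Real.sqrt_mul hclpos.le, Real.sqrt_sq hnlpos.le]
      _ ≤ Real.sqrt (Bn^2) := Real.sqrt_le_sqrt (by rw [← hnl]; exact hlow)
      _ = Bn := Real.sqrt_sq hBnpos.le
  · calc Bn = Real.sqrt (Bn^2) := (Real.sqrt_sq hBnpos.le).symm
      _ ≤ Real.sqrt (cu * ((n:ℝ)^l)^2) := Real.sqrt_le_sqrt (by rw [← hnl]; exact hup)
      _ = Real.sqrt cu * (n:ℝ)^l := by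
          rw [Real.sqrt_mul hcupos.le, Real.sqrt_sq hnlpos.le]
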